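/- Let T: 𝕋 → 𝕋 be continuous with finite fibers, X ⊂ 𝕋 an infinite rotational proper subset with 0 ∉ X, μ a T-invariant Borel probability measure on X, and Φ(x) = μ([α,x]) for x ∈ X where α = inf X. Then there exists an irrational θ₀ ∈ (0,1) such that Φ(T(x)) ≡ Φ(x) + θ₀ (mod 1) for all x ∈ X. -/

import Mathlib

open Set Filter MeasureTheory
open scoped ENNReal

noncomputable def rep (z : UnitAddCircle) : ℝ := (AddCircle.equivIco 1 0 z : ℝ)

def MinimalOn (T : UnitAddCircle → UnitAddCircle) (X : Set UnitAddCircle) : Prop :=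
  ∀ x ∈ X, ∀ y ∈ X, y ∈ closure {z : UnitAddCircle | ∃ n : ℕ, T^[n] x = z}

def PreservesCyclicOrder (T : UnitAddCircle → UnitAddCircle) (X : Set UnitAddCircle) : Prop :=
  ∀ p ∈ X, ∀ q ∈ X, ∀ r ∈ X,
    T p ≠ T q → T q ≠ T r → T r ≠ T p →
    sbtw p q r → sbtw (T p) (T q) (T r)

def IsRotational (T : UnitAddCircle → UnitAddCircle) (X : Set UnitAddCircle) : Prop :=
  IsClosed X ∧ Set.MapsTo T X X ∧ MinimalOn T X ∧ PreservesCyclicOrder T X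

private lemma one_pos' : (0:ℝ) < 1 := one_pos

section helpers

lemma rep_mem (z : UnitAddCircle) : rep z ∈ Set.Ico (0:ℝ) 1 := by
  have := (AddCircle.equivIco 1 0 z).2
  simpa [rep] using this

lemma rep_coe (z : UnitAddCircle) : ((rep z : ℝ) : UnitAddCircle) = z :=
  (AddCircle.equivIco 1 0).symm_apply_apply z

lemma coe_inj_Ico {r s : ℝ} (hr : r ∈ Set.Ico (0:ℝ) 1) (hs : s ∈ Set.Ico (0:ℝ) 1) :
    ((r : ℝ) : UnitAddCircle) = ((s : ℝ) : UnitAddCircle) ↔ r = s :=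
  AddCircle.coe_eq_coe_iff_of_mem_Ico (p := 1) (a := 0) (by simpa using hr) (by simpa using hs)

lemma rep_coe' {r : ℝ} (hr : r ∈ Set.Ico (0:ℝ) 1) : rep ((r : ℝ) : UnitAddCircle) = r :=
  (coe_inj_Ico (rep_mem _) hr).mp (rep_coe _)

lemma toIco_eval {u v : ℝ} (hu : u ∈ Set.Ico (0:ℝ) 1) (hv : v ∈ Set.Ico (0:ℝ) 1) :
    toIcoMod one_pos' u v = if u ≤ v then v else v + 1 := by
  rcases hu with ⟨hu0, hu1⟩; rcases hv with ⟨hv0, hv1⟩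
  split_ifs with h
  · rw [toIcoMod_eq_self]; exact ⟨h, by linarith⟩
  · rw [← toIcoMod_add_right, toIcoMod_eq_self]
    exact ⟨by linarith [not_le.mp h], by linarith [not_le.mp h]⟩

lemma toIoc_eval {u v : ℝ} (hu : u ∈ Set.Ico (0:ℝ) 1) (hv : v ∈ Set.Ico (0:ℝ) 1) :
    toIocMod one_pos' u v = if u < v then v else v + 1 := by
  rcases hu with ⟨hu0, hu1⟩; rcases hv with ⟨hv0, hv1⟩
  split_ifs with h
  · rw [toIocMod_eq_self]; exact ⟨h, by linarith⟩
  · rw [← toIocMod_add_right, toIocMod_eq_self]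
    exact ⟨by linarith, by linarith [not_lt.mp h]⟩

lemma btw_char {u v w : ℝ} (hu : u ∈ Set.Ico (0:ℝ) 1) (hv : v ∈ Set.Ico (0:ℝ) 1)
    (hw : w ∈ Set.Ico (0:ℝ) 1) :
    Btw.btw ((u:ℝ) : UnitAddCircle) ((v:ℝ) : UnitAddCircle) ((w:ℝ) : UnitAddCircle) ↔
      (if u ≤ v then v else v + 1) ≤ (if u < w then w else w + 1) := by
  have h : Btw.btw ((u:ℝ) : UnitAddCircle) ((v:ℝ):UnitAddCircle) ((w:ℝ):UnitAddCircle) ↔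
      toIcoMod one_pos' u v ≤ toIocMod one_pos' u w := QuotientAddGroup.btw_coe_iff
  rw [h, toIco_eval hu hv, toIoc_eval hu hw]

lemma sbtw_char {u v w : ℝ} (hu : u ∈ Set.Ico (0:ℝ) 1) (hv : v ∈ Set.Ico (0:ℝ) 1)
    (hw : w ∈ Set.Ico (0:ℝ) 1) (h1 : u ≠ v) (h2 : v ≠ w) (h3 : w ≠ u) :
    sbtw ((u:ℝ) : UnitAddCircle) ((v:ℝ) : UnitAddCircle) ((w:ℝ) : UnitAddCircle) ↔
      ((u < v ∧ v < w) ∨ (v < w ∧ w < u) ∨ (w < u ∧ u < v)) := by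
  rw [sbtw_iff_not_btw, btw_char hw hv hu]
  rcases hu with ⟨hu0, hu1⟩; rcases hv with ⟨hv0, hv1⟩; rcases hw with ⟨hw0, hw1⟩
  split_ifs with hif1 hif2 hif2 <;> push_neg <;> constructor <;> intro h
  all_goals try (rcases h with ⟨ha,hb⟩|⟨ha,hb⟩|⟨ha,hb⟩ <;> linarith)
  all_goals
    rcases h1.lt_or_gt with h1'|h1' <;> rcases h2.lt_or_gt with h2'|h2' <;>
      rcases h3.lt_or_gt with h3'|h3' <;>
      first
        | exact Or.inl ⟨by linarith, by linarith⟩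
        | exact Or.inr (Or.inl ⟨by linarith, by linarith⟩)
        | exact Or.inr (Or.inr ⟨by linarith, by linarith⟩)
        | exact absurd rfl (by intro h; linarith)
        | (exfalso; linarith)

lemma image_Icc_eq {s t : ℝ} (h0 : 0 ≤ s) (h1 : t < 1) :
    (fun r : ℝ => ((r : ℝ) : UnitAddCircle)) '' Set.Icc s t
      = {z : UnitAddCircle | s ≤ rep z ∧ rep z ≤ t} := by
  ext z
  constructor
  · rintro ⟨r, hr, rfl⟩
    have : rep ((r:ℝ):UnitAddCircle) = r := rep_coe' ⟨le_trans h0 hr.1, lt_of_le_of_lt hr.2 h1⟩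
    rw [mem_setOf_eq, this]; exact hr
  · rintro ⟨hz1, hz2⟩
    exact ⟨rep z, ⟨hz1, hz2⟩, rep_coe z⟩

lemma image_Ioo_eq {s t : ℝ} (h0 : 0 ≤ s) (h1 : t ≤ 1) :
    (fun r : ℝ => ((r : ℝ) : UnitAddCircle)) '' Set.Ioo s t
      = {z : UnitAddCircle | s < rep z ∧ rep z < t} := by
  ext z
  constructor
  · rintro ⟨r, hr, rfl⟩
    have : rep ((r:ℝ):UnitAddCircle) = r := rep_coe' ⟨le_of_lt (lt_of_le_of_lt h0 hr.1),
      lt_of_lt_of_le hr.2 h1⟩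
    rw [mem_setOf_eq, this]; exact hr
  · rintro ⟨hz1, hz2⟩
    exact ⟨rep z, ⟨hz1, hz2⟩, rep_coe z⟩

lemma measurable_arc {s t : ℝ} (h0 : 0 ≤ s) (h1 : t < 1) :
    MeasurableSet {z : UnitAddCircle | s ≤ rep z ∧ rep z ≤ t} := by
  rw [← image_Icc_eq h0 h1]
  exact (isCompact_Icc.image (AddCircle.continuous_mk' 1)).isClosed.measurableSet

lemma open_arc {s t : ℝ} (h0 : 0 ≤ s) (h1 : t ≤ 1) :
    IsOpen {z : UnitAddCircle | s < rep z ∧ rep z < t} := by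
  rw [← image_Ioo_eq h0 h1]
  exact QuotientAddGroup.isOpenMap_coe _ isOpen_Ioo

lemma seg_eq {s t : ℝ} (h0 : 0 ≤ s) (hs1 : s < 1) (h1 : t < 1) :
    {z : UnitAddCircle | s < rep z ∧ rep z ≤ t}
      = {z : UnitAddCircle | s ≤ rep z ∧ rep z ≤ t} \ {((s:ℝ) : UnitAddCircle)} := by
  ext z
  simp only [mem_setOf_eq, mem_diff, mem_singleton_iff]
  constructor
  · rintro ⟨hz1, hz2⟩
    refine ⟨⟨le_of_lt hz1, hz2⟩, fun h => ?_⟩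
    rw [h, rep_coe' ⟨h0, hs1⟩] at hz1; exact lt_irrefl _ hz1
  · rintro ⟨⟨hz1, hz2⟩, hne⟩
    refine ⟨lt_of_le_of_ne hz1 (fun h => hne ?_), hz2⟩
    rw [h, rep_coe z]

lemma measurable_seg {s t : ℝ} (h0 : 0 ≤ s) (hs1 : s < 1) (h1 : t < 1) :
    MeasurableSet {z : UnitAddCircle | s < rep z ∧ rep z ≤ t} := by
  rw [seg_eq h0 hs1 h1]
  exact (measurable_arc h0 h1).diff (measurableSet_singleton _)

end helpers
set_option maxHeartbeats 1000000
lemma F_cont (μ : Measure UnitAddCircle) [IsProbabilityMeasure μ]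
    (hatom : ∀ z : UnitAddCircle, μ {z} = 0) (α : ℝ) (hα0 : 0 ≤ α)
    {t₀ : ℝ} (ht0 : 0 ≤ t₀) (ht1 : t₀ < 1) :
    ContinuousAt (fun t : ℝ => (μ {z : UnitAddCircle | α ≤ rep z ∧ rep z ≤ t}).toReal) t₀ := by
  set m : ℝ → ℝ≥0∞ := fun t => μ {z : UnitAddCircle | α ≤ rep z ∧ rep z ≤ t} with hm
  have hmfin : ∀ t, m t ≠ ⊤ := fun t => (measure_lt_top μ _).ne
  have hFmono : Monotone (fun t => (m t).toReal) := fun s t hst =>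
    ENNReal.toReal_mono (hmfin t) (measure_mono (fun z hz => ⟨hz.1, hz.2.trans hst⟩))
  set c : ℝ := (1 - t₀) / 2 with hc
  have hcpos : 0 < c := by rw [hc]; linarith
  set u : ℕ → ℝ := fun n => t₀ + c / (n + 1) with hu
  have hdiv : ∀ n : ℕ, (0:ℝ) < c / (n+1) := fun n => by positivity
  have hdivle : ∀ n : ℕ, c / (n+1) ≤ c := by
    intro n
    apply div_le_self hcpos.le
    have hn : (0:ℝ) ≤ (n:ℝ) := Nat.cast_nonneg n
    linarith
  have hun1 : ∀ n, u n < 1 := by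
    intro n
    have := hdivle n
    rw [hu]; simp only []; rw [hc] at *; linarith
  have hulim : Filter.Tendsto u Filter.atTop (nhds t₀) := by
    have h1 : Filter.Tendsto (fun n : ℕ => c / ((n:ℝ)+1)) Filter.atTop (nhds 0) := by
      have h2 := tendsto_one_div_add_atTop_nhds_zero_nat.const_mul c
      simpa [mul_one_div, div_eq_mul_inv] using h2
    have h3 := Filter.Tendsto.const_add t₀ h1
    simpa using h3
  have hanti : Antitone (fun n : ℕ => {z : UnitAddCircle | α ≤ rep z ∧ rep z ≤ u n}) := by
    intro i j hij z hz
    refine ⟨hz.1, hz.2.trans ?_⟩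
    rw [hu]
    simp only [add_le_add_iff_left]
    apply div_le_div_of_nonneg_left hcpos.le (by positivity)
    have : (i:ℝ) ≤ (j:ℝ) := by exact_mod_cast hij
    linarith
  have hInter : (⋂ n : ℕ, {z : UnitAddCircle | α ≤ rep z ∧ rep z ≤ u n})
      = {z : UnitAddCircle | α ≤ rep z ∧ rep z ≤ t₀} := by
    ext z
    simp only [Set.mem_iInter, Set.mem_setOf_eq]
    constructor
    · intro h
      refine ⟨(h 0).1, ge_of_tendsto hulim (Filter.Eventually.of_forall fun n => (h n).2)⟩
    · intro h n
      refine ⟨h.1, h.2.trans ?_⟩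
      rw [hu]
      simp only [le_add_iff_nonneg_right]  -- t₀ ≤ t₀ + c/(n+1)
      exact (hdiv n).le
  have hright0 : Filter.Tendsto (fun n => m (u n)) Filter.atTop (nhds (m t₀)) := by
    have h := tendsto_measure_iInter_atTop (μ := μ)
      (s := fun n : ℕ => {z : UnitAddCircle | α ≤ rep z ∧ rep z ≤ u n})
      (fun n => (measurable_arc hα0 (hun1 n)).nullMeasurableSet) hanti ⟨0, hmfin _⟩
    rw [hInter] at h
    exact h
  have hright : Filter.Tendsto (fun n => (m (u n)).toReal) Filter.atTop (nhds ((m t₀).toReal)) :=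
    (ENNReal.tendsto_toReal (hmfin t₀)).comp hright0
  set v : ℕ → ℝ := fun n => t₀ - 1 / (n + 1) with hv
  have hv1 : ∀ n, v n < 1 := fun n => by
    rw [hv]; simp only []
    have : (0:ℝ) < 1 / (n+1) := by positivity
    linarith
  have hmono2 : Monotone (fun n : ℕ => {z : UnitAddCircle | α ≤ rep z ∧ rep z ≤ v n}) := by
    intro i j hij z hz
    refine ⟨hz.1, hz.2.trans ?_⟩
    rw [hv]
    simp only [sub_le_sub_iff_left]
    apply div_le_div_of_nonneg_left one_pos.le (by positivity)
    have : (i:ℝ) ≤ (j:ℝ) := by exact_mod_cast hij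
    linarith
  have hUnion : (⋃ n : ℕ, {z : UnitAddCircle | α ≤ rep z ∧ rep z ≤ v n})
      = {z : UnitAddCircle | α ≤ rep z ∧ rep z < t₀} := by
    ext z
    simp only [Set.mem_iUnion, Set.mem_setOf_eq]
    constructor
    · rintro ⟨n, h1, h2⟩
      refine ⟨h1, lt_of_le_of_lt h2 ?_⟩
      rw [hv]; simp only []
      have : (0:ℝ) < 1 / (n+1) := by positivity
      linarith
    · rintro ⟨h1, h2⟩
      obtain ⟨n, hn⟩ := exists_nat_one_div_lt (show (0:ℝ) < t₀ - rep z by linarith)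
      refine ⟨n, h1, ?_⟩
      rw [hv]; simp only []
      linarith [hn]
  have hμIoo : μ {z : UnitAddCircle | α ≤ rep z ∧ rep z < t₀} = m t₀ := by
    refine le_antisymm (measure_mono (fun z hz => ⟨hz.1, hz.2.le⟩)) ?_
    have hsub : {z : UnitAddCircle | α ≤ rep z ∧ rep z ≤ t₀}
        ⊆ {z : UnitAddCircle | α ≤ rep z ∧ rep z < t₀} ∪ {((t₀:ℝ) : UnitAddCircle)} := by
      rintro z ⟨h1, h2⟩
      rcases lt_or_eq_of_le h2 with h | h
      · exact Or.inl ⟨h1, h⟩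
      · right
        rw [Set.mem_singleton_iff, ← h, rep_coe]
    calc m t₀ ≤ μ ({z : UnitAddCircle | α ≤ rep z ∧ rep z < t₀} ∪ {((t₀:ℝ):UnitAddCircle)}) :=
        measure_mono hsub
      _ ≤ μ {z : UnitAddCircle | α ≤ rep z ∧ rep z < t₀} + μ {((t₀:ℝ):UnitAddCircle)} :=
        measure_union_le _ _
      _ = μ {z : UnitAddCircle | α ≤ rep z ∧ rep z < t₀} := by rw [hatom, add_zero]
  have hleft0 : Filter.Tendsto (fun n => m (v n)) Filter.atTop (nhds (m t₀)) := by
    have h := tendsto_measure_iUnion_atTop (μ := μ)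
      (s := fun n : ℕ => {z : UnitAddCircle | α ≤ rep z ∧ rep z ≤ v n}) hmono2
    rw [hUnion, hμIoo] at h
    exact h
  have hleft : Filter.Tendsto (fun n => (m (v n)).toReal) Filter.atTop (nhds ((m t₀).toReal)) :=
    (ENNReal.tendsto_toReal (hmfin t₀)).comp hleft0
  rw [Metric.continuousAt_iff]
  intro ε hε
  have h1 : ∀ᶠ n in Filter.atTop, (m (u n)).toReal < (m t₀).toReal + ε :=
    hright.eventually_lt_const (by linarith)
  have h2 : ∀ᶠ n in Filter.atTop, (m t₀).toReal - ε < (m (v n)).toReal :=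
    hleft.eventually_const_lt (by linarith)
  obtain ⟨n₁, hn₁⟩ := h1.exists
  obtain ⟨n₂, hn₂⟩ := h2.exists
  refine ⟨min (c / (n₁ + 1)) (1 / (n₂ + 1)), lt_min (hdiv n₁) (by positivity), ?_⟩
  intro s hs
  rw [Real.dist_eq] at hs
  rw [Real.dist_eq, abs_lt]
  have hs1 : s ≤ u n₁ := by
    have := abs_lt.mp hs
    have h3 := min_le_left (c / (n₁ + 1)) (1 / (n₂ + 1))
    rw [hu]; simp only []
    linarith [this.2]
  have hs2 : v n₂ ≤ s := by
    have := abs_lt.mp hs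
    have h3 := min_le_right (c / (n₁ + 1)) (1 / (n₂ + 1))
    rw [hv]; simp only []
    linarith [this.1]
  constructor
  · linarith [hFmono hs2]
  · linarith [hFmono hs1]

theorem semiconjugacy_to_rotation
    (T : UnitAddCircle → UnitAddCircle) (hT : Continuous T)
    (hfib : ∀ y : UnitAddCircle, (T ⁻¹' {y}).Finite)
    (X : Set UnitAddCircle) (hrot : IsRotational T X)
    (hinf : X.Infinite) (hproper : X ≠ Set.univ)
    (h0 : (0 : UnitAddCircle) ∉ X)
    (Xr : Set ℝ)
    (hXr : Xr = {r : ℝ | r ∈ Set.Ico (0:ℝ) 1 ∧ ((r : ℝ) : UnitAddCircle) ∈ X})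
    (α β : ℝ) (hα : α = sInf Xr) (hβ : β = sSup Xr)
    (μ : Measure UnitAddCircle) [IsProbabilityMeasure μ]
    (hμinv : ∀ s : Set UnitAddCircle, MeasurableSet s → μ (T ⁻¹' s) = μ s)
    (hsupp : μ Xᶜ = 0)
    (Φ : UnitAddCircle → ℝ)
    (hΦ : ∀ x : UnitAddCircle,
      Φ x = (μ {t : UnitAddCircle | α ≤ rep t ∧ rep t ≤ rep x}).toReal) :
    ∃ θ₀ : ℝ, Irrational θ₀ ∧ θ₀ ∈ Set.Ioo (0:ℝ) 1 ∧
      ∀ x ∈ X, ((Φ (T x) : ℝ) : UnitAddCircle) = ((Φ x + θ₀ : ℝ) : UnitAddCircle) := by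
  obtain ⟨hXc, hmaps, hmin, hcyc⟩ := hrot
  have hco : Continuous (fun r : ℝ => ((r:ℝ) : UnitAddCircle)) := AddCircle.continuous_mk' 1
  -- basic facts about Xr
  have hrepX : ∀ x ∈ X, rep x ∈ Xr := by
    intro x hx; rw [hXr]; exact ⟨rep_mem x, by rw [rep_coe]; exact hx⟩
  have hXrmem : ∀ r ∈ Xr, ((r:ℝ):UnitAddCircle) ∈ X := by
    intro r hr; rw [hXr] at hr; exact hr.2
  have hXrIco : ∀ r ∈ Xr, r ∈ Set.Ico (0:ℝ) 1 := by
    intro r hr; rw [hXr] at hr; exact hr.1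
  have hXrne : Xr.Nonempty := by
    obtain ⟨x, hx⟩ := hinf.nonempty
    exact ⟨rep x, hrepX x hx⟩
  have hbddb : BddBelow Xr := ⟨0, fun r hr => (hXrIco r hr).1⟩
  have hbdda : BddAbove Xr := ⟨1, fun r hr => le_of_lt (hXrIco r hr).2⟩
  have hXrclosed : IsClosed Xr := by
    have : IsSeqClosed Xr := by
      intro f r hf hfr
      have h1 : ((r:ℝ):UnitAddCircle) ∈ X := by
        apply hXc.mem_of_tendsto ((hco.tendsto r).comp hfr)
        exact Filter.Eventually.of_forall (fun n => hXrmem _ (hf n))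
      have h2 : r ∈ Set.Icc (0:ℝ) 1 :=
        isClosed_Icc.mem_of_tendsto hfr
          (Filter.Eventually.of_forall (fun n => ⟨(hXrIco _ (hf n)).1, le_of_lt (hXrIco _ (hf n)).2⟩))
      have h3 : r ≠ 1 := by
        intro h; rw [h] at h1
        have : ((1:ℝ) : UnitAddCircle) = 0 := by
          have := AddCircle.coe_add_period 1 (0:ℝ); simpa using this
        rw [this] at h1; exact h0 h1
      rw [hXr]; exact ⟨⟨h2.1, lt_of_le_of_ne h2.2 h3⟩, h1⟩
    exact this.isClosed
  have hαXr : α ∈ Xr := hα ▸ hXrclosed.csInf_mem hXrne hbddb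
  have hβXr : β ∈ Xr := hβ ▸ hXrclosed.csSup_mem hXrne hbdda
  have hαle : ∀ r ∈ Xr, α ≤ r := fun r hr => hα ▸ csInf_le hbddb hr
  have hβge : ∀ r ∈ Xr, r ≤ β := fun r hr => hβ ▸ le_csSup hbdda hr
  have hα0 : 0 < α := by
    rcases lt_or_eq_of_le (hXrIco α hαXr).1 with h | h
    · exact h
    · exfalso
      have := hXrmem α hαXr
      rw [← h] at this
      have h00 : (((0:ℝ)):UnitAddCircle) = 0 := by norm_num
      rw [h00] at this; exact h0 this
  have hβ1 : β < 1 := (hXrIco β hβXr).2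
  have hα1 : α < 1 := (hXrIco α hαXr).2
  -- dynamics
  have hTmeas : Measurable T := hT.measurable
  have hXmeas : MeasurableSet X := hXc.measurableSet
  have hmuX : μ X = 1 := by
    have h1 : (1:ℝ≥0∞) = μ Set.univ := (measure_univ).symm
    have h2 : μ Set.univ ≤ μ X + μ Xᶜ := by
      rw [← Set.union_compl_self X]; exact measure_union_le _ _
    rw [hsupp, add_zero] at h2
    exact le_antisymm (prob_le_one) (h1 ▸ h2)
  have hinvn : ∀ (n : ℕ) (s : Set UnitAddCircle), MeasurableSet s → μ (T^[n] ⁻¹' s) = μ s := by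
    intro n
    induction n with
    | zero => intro s _; simp
    | succ n ih =>
      intro s hs
      rw [Function.iterate_succ, Set.preimage_comp]
      rw [hμinv _ ((hTmeas.iterate n) hs)]
      exact ih s hs
  have hnoper : ∀ x ∈ X, ∀ k : ℕ, 1 ≤ k → T^[k] x ≠ x := by
    intro x hx k hk hper
    have hcycl : ∀ q : ℕ, T^[q * k] x = x := by
      intro q; induction q with
      | zero => simp
      | succ q ih => rw [Nat.succ_mul, Function.iterate_add_apply, hper, ih]
    have hsub : {z : UnitAddCircle | ∃ n : ℕ, T^[n] x = z} ⊆ (fun i => T^[i] x) '' Set.Iio k := by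
      rintro z ⟨n, rfl⟩
      refine ⟨n % k, Nat.mod_lt n hk, ?_⟩
      conv_rhs => rw [← Nat.mod_add_div n k]
      rw [Function.iterate_add_apply, mul_comm, hcycl]
    have hfinS : Set.Finite {z : UnitAddCircle | ∃ n : ℕ, T^[n] x = z} :=
      ((Set.finite_Iio k).image _).subset hsub
    have hXsub : X ⊆ {z : UnitAddCircle | ∃ n : ℕ, T^[n] x = z} := by
      intro y hy
      have := hmin x hx y hy
      rwa [hfinS.isClosed.closure_eq] at this
    exact hinf (hfinS.subset hXsub)
  have hatom : ∀ z : UnitAddCircle, μ {z} = 0 := by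
    intro z
    by_contra hz
    have hzX : z ∈ X := by
      by_contra h
      exact hz (le_antisymm (le_trans (measure_mono (Set.singleton_subset_iff.mpr h)) hsupp.le)
        (zero_le))
    by_cases hinj : Function.Injective (fun n : ℕ => T^[n] z)
    · have hstep : ∀ w : UnitAddCircle, μ {w} ≤ μ {T w} := by
        intro w
        have h1 : {w} ⊆ T ⁻¹' {T w} := by intro u hu; simp_all
        calc μ {w} ≤ μ (T ⁻¹' {T w}) := measure_mono h1
        _ = μ {T w} := hμinv _ (measurableSet_singleton _)
      have hmono : ∀ n : ℕ, μ {z} ≤ μ {T^[n] z} := by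
        intro n; induction n with
        | zero => simp
        | succ n ih =>
          rw [Function.iterate_succ_apply']
          exact le_trans ih (hstep _)
      have hbound : ∀ n : ℕ, (n : ℝ≥0∞) * μ {z} ≤ 1 := by
        intro n
        have hdisj : (↑(Finset.range n) : Set ℕ).PairwiseDisjoint
            (fun i => ({T^[i] z} : Set UnitAddCircle)) := by
          intro i _ j _ hij
          simp only [Function.onFun, Set.disjoint_singleton_left, Set.mem_singleton_iff]
          exact fun h => hij (hinj h)
        have hsum := measure_biUnion_finset (μ := μ) hdisj
          (fun i _ => measurableSet_singleton (T^[i] z))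
        have h2 : (Finset.range n).sum (fun i => μ {T^[i] z}) ≤ 1 := by
          rw [← hsum]
          exact le_trans (measure_mono (Set.subset_univ _)) measure_univ.le
        have h3 : (n : ℝ≥0∞) * μ {z} = (Finset.range n).sum (fun _ => μ {z}) := by
          simp [Finset.sum_const, mul_comm]
        rw [h3]
        exact le_trans (Finset.sum_le_sum (fun i _ => hmono i)) h2
      have hfin : μ {z} ≠ ⊤ := by
        intro h
        have := hbound 1
        rw [h] at this
        simp at this
      have hpos : 0 < (μ {z}).toReal := ENNReal.toReal_pos hz hfin
      obtain ⟨n, hn⟩ := exists_nat_gt (1 / (μ {z}).toReal)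
      have := hbound n
      have hreal : (n : ℝ) * (μ {z}).toReal ≤ 1 := by
        have h4 : ((n : ℝ≥0∞) * μ {z}).toReal ≤ (1 : ℝ≥0∞).toReal :=
          ENNReal.toReal_mono (by simp) this
        rwa [ENNReal.toReal_mul, ENNReal.toReal_natCast, ENNReal.toReal_one] at h4
      have : (1:ℝ) < n * (μ {z}).toReal := by
        rw [div_lt_iff₀ hpos] at hn; linarith
      linarith
    · rw [Function.not_injective_iff] at hinj
      obtain ⟨m, n, heq, hne⟩ := hinj
      rcases hne.lt_or_gt with h | h
      · have hw : T^[m] z ∈ X := (hmaps.iterate m) hzX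
        refine hnoper (T^[m] z) hw (n - m) (by omega) ?_
        rw [← Function.iterate_add_apply, Nat.sub_add_cancel h.le]
        exact heq.symm
      · have hw : T^[n] z ∈ X := (hmaps.iterate n) hzX
        refine hnoper (T^[n] z) hw (m - n) (by omega) ?_
        rw [← Function.iterate_add_apply, Nat.sub_add_cancel h.le]
        exact heq
  haveI hna : NullSingletonClass μ := ⟨hatom⟩
  have hopenpos : ∀ U : Set UnitAddCircle, IsOpen U → (U ∩ X).Nonempty → μ U ≠ 0 := by
    intro U hU ⟨x, hxU, hxX⟩ hμU
    have hW : μ (⋃ n : ℕ, T^[n] ⁻¹' U) = 0 := by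
      refine le_antisymm (le_trans (measure_iUnion_le _) ?_) (zero_le)
      simp only [hinvn _ U hU.measurableSet, hμU]
      simp
    have hXW : X ⊆ ⋃ n : ℕ, T^[n] ⁻¹' U := by
      intro y hy
      have hcl := hmin y hy x hxX
      obtain ⟨z, hzU, n, rfl⟩ := mem_closure_iff.mp hcl U hU hxU
      exact Set.mem_iUnion.mpr ⟨n, hzU⟩
    have : μ X ≤ 0 := hW ▸ measure_mono hXW
    rw [hmuX] at this
    simp at this
  have hsurj : X ⊆ T '' X := by
    have hTXc : IsClosed (T '' X) :=
      (hXc.isCompact.image hT).isClosed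
    intro y hy
    obtain ⟨x₀, hx₀⟩ := hinf.nonempty
    have hcl := hmin (T x₀) (hmaps hx₀) y hy
    have hsubset : {z : UnitAddCircle | ∃ n : ℕ, T^[n] (T x₀) = z} ⊆ T '' X := by
      rintro z ⟨n, rfl⟩
      exact ⟨T^[n] x₀, (hmaps.iterate n) hx₀, (Function.iterate_succ_apply' T n x₀).symm ▸ rfl⟩
    have := closure_mono hsubset hcl
    rwa [hTXc.closure_eq] at this
  -- the minimum preimage of the leftmost point
  set a : UnitAddCircle := ((α : ℝ) : UnitAddCircle) with ha_def
  have haX : a ∈ X := hXrmem α hαXr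
  have hrepa : rep a = α := rep_coe' ⟨hα0.le, hα1⟩
  set P : Set ℝ := {r | r ∈ Xr ∧ T ((r:ℝ):UnitAddCircle) = a} with hP_def
  have hPne : P.Nonempty := by
    obtain ⟨x, hxX, hTx⟩ := hsurj haX
    refine ⟨rep x, hrepX x hxX, ?_⟩
    rw [rep_coe]; exact hTx
  have hPfin : P.Finite := by
    apply ((hfib a).image rep).subset
    rintro r ⟨hr1, hr2⟩
    exact ⟨((r:ℝ):UnitAddCircle), hr2, rep_coe' (hXrIco r hr1)⟩
  set b' : ℝ := sInf P with hb'_def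
  have hb'P : b' ∈ P := hPne.csInf_mem hPfin
  have hb'Xr : b' ∈ Xr := hb'P.1
  have hTb' : T ((b':ℝ):UnitAddCircle) = a := hb'P.2
  have hb'min : ∀ r ∈ P, b' ≤ r := fun r hr => csInf_le hPfin.bddBelow hr
  have hαb' : α < b' := by
    rcases lt_or_eq_of_le (hαle b' hb'Xr) with h | h
    · exact h
    · exfalso
      apply hnoper a haX 1 le_rfl
      rw [Function.iterate_one]
      rw [← h] at hTb'
      exact hTb'
  have hb'0 : 0 ≤ b' := (hXrIco b' hb'Xr).1
  have hb'1 : b' < 1 := (hXrIco b' hb'Xr).2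
  have hb'β : b' ≤ β := hβge b' hb'Xr
  -- the cumulative measure function
  set m : ℝ → ℝ≥0∞ := fun t => μ {z : UnitAddCircle | α ≤ rep z ∧ rep z ≤ t} with hm_def
  have hmfin : ∀ t, m t ≠ ⊤ := fun t => (measure_lt_top μ _).ne
  have hmle1 : ∀ t, m t ≤ 1 := fun t => prob_le_one
  have hmmono : ∀ s t, s ≤ t → m s ≤ m t := by
    intro s t hst
    exact measure_mono (fun z hz => ⟨hz.1, le_trans hz.2 hst⟩)
  have hXarc : ∀ t, β ≤ t → X ⊆ {z : UnitAddCircle | α ≤ rep z ∧ rep z ≤ t} := by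
    intro t hβt x hx
    exact ⟨hαle _ (hrepX x hx), le_trans (hβge _ (hrepX x hx)) hβt⟩
  have hmβ : m β = 1 := le_antisymm (hmle1 β) (by
    rw [← hmuX]; exact measure_mono (hXarc β le_rfl))
  have hsplit : ∀ s t : ℝ, α ≤ s → s ≤ t → t < 1 →
      m s + μ {z : UnitAddCircle | s < rep z ∧ rep z ≤ t} = m t := by
    intro s t hαs hst ht1
    have hs0 : 0 ≤ s := le_trans hα0.le hαs
    have hs1 : s < 1 := lt_of_le_of_lt hst ht1
    have hunion : {z : UnitAddCircle | α ≤ rep z ∧ rep z ≤ t}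
        = {z : UnitAddCircle | α ≤ rep z ∧ rep z ≤ s}
          ∪ {z : UnitAddCircle | s < rep z ∧ rep z ≤ t} := by
      ext z
      simp only [Set.mem_setOf_eq, Set.mem_union]
      constructor
      · rintro ⟨h1, h2⟩
        rcases le_or_gt (rep z) s with h | h
        · exact Or.inl ⟨h1, h⟩
        · exact Or.inr ⟨h, h2⟩
      · rintro (⟨h1, h2⟩ | ⟨h1, h2⟩)
        · exact ⟨h1, le_trans h2 hst⟩
        · exact ⟨le_trans hαs h1.le, h2⟩
    have hdisj : Disjoint {z : UnitAddCircle | α ≤ rep z ∧ rep z ≤ s}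
        {z : UnitAddCircle | s < rep z ∧ rep z ≤ t} := by
      rw [Set.disjoint_left]
      rintro z ⟨_, h2⟩ ⟨h3, _⟩
      exact absurd h2 (not_le.mpr h3)
    rw [hm_def]
    simp only []
    rw [hunion, measure_union hdisj (measurable_seg hs0 hs1 ht1)]
  have hptb : ∀ s : ℝ, 0 ≤ s → s < 1 → μ {z : UnitAddCircle | rep z = s} = 0 := by
    intro s h0s hs1
    have : {z : UnitAddCircle | rep z = s} ⊆ {((s:ℝ):UnitAddCircle)} := by
      intro z hz
      simp only [Set.mem_setOf_eq] at hz
      simp only [Set.mem_singleton_iff, ← hz, rep_coe]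
    exact le_antisymm (le_trans (measure_mono this) (hatom _).le) (zero_le)
  have hseg_union : ∀ s t : ℝ, 0 ≤ s → s < 1 → s ≤ t →
      μ {z : UnitAddCircle | s ≤ rep z ∧ rep z ≤ t}
        = μ {z : UnitAddCircle | s < rep z ∧ rep z ≤ t} := by
    intro s t hs0 hs1 hst
    have hsub : {z : UnitAddCircle | s ≤ rep z ∧ rep z ≤ t}
        ⊆ {z : UnitAddCircle | s < rep z ∧ rep z ≤ t} ∪ {z : UnitAddCircle | rep z = s} := by
      rintro z ⟨h1, h2⟩
      rcases lt_or_eq_of_le h1 with h | h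
      · exact Or.inl ⟨h, h2⟩
      · exact Or.inr h.symm
    refine le_antisymm ?_ (measure_mono (fun z hz => ⟨hz.1.le, hz.2⟩))
    calc μ {z : UnitAddCircle | s ≤ rep z ∧ rep z ≤ t}
        ≤ μ ({z : UnitAddCircle | s < rep z ∧ rep z ≤ t} ∪ {z : UnitAddCircle | rep z = s}) :=
          measure_mono hsub
      _ ≤ μ {z : UnitAddCircle | s < rep z ∧ rep z ≤ t} + μ {z : UnitAddCircle | rep z = s} :=
          measure_union_le _ _
      _ = μ {z : UnitAddCircle | s < rep z ∧ rep z ≤ t} := by rw [hptb s hs0 hs1, add_zero]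
  have hΦeq : ∀ x : UnitAddCircle, Φ x = (m (rep x)).toReal := fun x => hΦ x
  set θ₀ : ℝ := 1 - (m b').toReal with hθ_def
  -- helpers for the cyclic-order arguments
  have hTrep : ∀ s ∈ Xr, rep (T ((s:ℝ):UnitAddCircle)) ∈ Xr :=
    fun s hs => hrepX _ (hmaps (hXrmem s hs))
  have himg : ∀ s : ℝ, T ((s:ℝ):UnitAddCircle)
      = ((rep (T ((s:ℝ):UnitAddCircle)) : ℝ) : UnitAddCircle) :=
    fun s => (rep_coe _).symm
  have hrepne : ∀ s ∈ Xr, T ((s:ℝ):UnitAddCircle) ≠ a → rep (T ((s:ℝ):UnitAddCircle)) ≠ α := by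
    intro s hs hne h
    apply hne
    rw [himg s, h, ha_def]
  have hrepne2 : ∀ s r : ℝ, T ((s:ℝ):UnitAddCircle) ≠ T ((r:ℝ):UnitAddCircle) →
      rep (T ((s:ℝ):UnitAddCircle)) ≠ rep (T ((r:ℝ):UnitAddCircle)) := by
    intro s r hne h
    apply hne
    rw [himg s, himg r, h]
  -- the three monotonicity lemmas
  have hM2 : ∀ s r : ℝ, s ∈ Xr → r ∈ Xr → b' < s → s < r →
      T ((s:ℝ):UnitAddCircle) ≠ a → T ((r:ℝ):UnitAddCircle) ≠ a →
      T ((s:ℝ):UnitAddCircle) ≠ T ((r:ℝ):UnitAddCircle) →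
      rep (T ((s:ℝ):UnitAddCircle)) < rep (T ((r:ℝ):UnitAddCircle)) := by
    intro s r hs hr hbs hsr hsa hra hsrne
    have hsb' : sbtw ((b':ℝ):UnitAddCircle) ((s:ℝ):UnitAddCircle) ((r:ℝ):UnitAddCircle) := by
      rw [sbtw_char (hXrIco b' hb'Xr) (hXrIco s hs) (hXrIco r hr) hbs.ne hsr.ne
        (by intro h; rw [h] at hsr; linarith)]
      exact Or.inl ⟨hbs, hsr⟩
    have h1 := hcyc _ (hXrmem b' hb'Xr) _ (hXrmem s hs) _ (hXrmem r hr)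
      (by rw [hTb']; exact fun h => hsa h.symm) hsrne (by rw [hTb']; exact hra) hsb'
    rw [hTb', ha_def, himg s, himg r] at h1
    have h2 := (sbtw_char ⟨hα0.le, hα1⟩ (hXrIco _ (hTrep s hs)) (hXrIco _ (hTrep r hr))
      (Ne.symm (hrepne s hs hsa)) (hrepne2 s r hsrne) (hrepne r hr hra)).mp h1
    rcases h2 with ⟨h3, h4⟩ | ⟨h3, h4⟩ | ⟨h3, h4⟩
    · exact h4
    · exact absurd (hαle _ (hTrep r hr)) (not_le.mpr h4)
    · exact absurd (hαle _ (hTrep r hr)) (not_le.mpr h3)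
  have hM1 : ∀ s r : ℝ, s ∈ Xr → r ∈ Xr → s < r → r < b' →
      T ((s:ℝ):UnitAddCircle) ≠ a → T ((r:ℝ):UnitAddCircle) ≠ a →
      T ((s:ℝ):UnitAddCircle) ≠ T ((r:ℝ):UnitAddCircle) →
      rep (T ((s:ℝ):UnitAddCircle)) < rep (T ((r:ℝ):UnitAddCircle)) := by
    intro s r hs hr hsr hrb hsa hra hsrne
    have hsb' : sbtw ((s:ℝ):UnitAddCircle) ((r:ℝ):UnitAddCircle) ((b':ℝ):UnitAddCircle) := by
      rw [sbtw_char (hXrIco s hs) (hXrIco r hr) (hXrIco b' hb'Xr) hsr.ne hrb.ne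
        (by intro h; rw [← h] at hsr; linarith)]
      exact Or.inl ⟨hsr, hrb⟩
    have h1 := hcyc _ (hXrmem s hs) _ (hXrmem r hr) _ (hXrmem b' hb'Xr)
      hsrne (by rw [hTb']; exact hra) (by rw [hTb']; exact fun h => hsa h.symm) hsb'
    rw [hTb', ha_def, himg s, himg r] at h1
    have h2 := (sbtw_char (hXrIco _ (hTrep s hs)) (hXrIco _ (hTrep r hr)) ⟨hα0.le, hα1⟩
      (hrepne2 s r hsrne) (hrepne r hr hra) (Ne.symm (hrepne s hs hsa))).mp h1
    rcases h2 with ⟨h3, h4⟩ | ⟨h3, h4⟩ | ⟨h3, h4⟩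
    · exact h3
    · exact absurd (hαle _ (hTrep r hr)) (not_le.mpr h3)
    · exact h4
  have hD : ∀ s r : ℝ, s ∈ Xr → r ∈ Xr → s < b' → b' < r →
      T ((s:ℝ):UnitAddCircle) ≠ a → T ((r:ℝ):UnitAddCircle) ≠ a →
      T ((s:ℝ):UnitAddCircle) ≠ T ((r:ℝ):UnitAddCircle) →
      rep (T ((r:ℝ):UnitAddCircle)) < rep (T ((s:ℝ):UnitAddCircle)) := by
    intro s r hs hr hsb hbr hsa hra hsrne
    have hsb' : sbtw ((b':ℝ):UnitAddCircle) ((r:ℝ):UnitAddCircle) ((s:ℝ):UnitAddCircle) := by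
      rw [sbtw_char (hXrIco b' hb'Xr) (hXrIco r hr) (hXrIco s hs) hbr.ne
        (by intro h; rw [h] at hbr; linarith) hsb.ne]
      exact Or.inr (Or.inr ⟨hsb, hbr⟩)
    have h1 := hcyc _ (hXrmem b' hb'Xr) _ (hXrmem r hr) _ (hXrmem s hs)
      (by rw [hTb']; exact fun h => hra h.symm) (fun h => hsrne h.symm)
      (by rw [hTb']; exact hsa) hsb'
    rw [hTb', ha_def, himg s, himg r] at h1
    have h2 := (sbtw_char ⟨hα0.le, hα1⟩ (hXrIco _ (hTrep r hr)) (hXrIco _ (hTrep s hs))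
      (Ne.symm (hrepne r hr hra)) (fun h => hrepne2 s r hsrne h.symm)
      (hrepne s hs hsa)).mp h1
    rcases h2 with ⟨h3, h4⟩ | ⟨h3, h4⟩ | ⟨h3, h4⟩
    · exact h4
    · exact absurd (hαle _ (hTrep s hs)) (not_le.mpr h4)
    · exact absurd (hαle _ (hTrep s hs)) (not_le.mpr h3)
  -- null exceptional sets
  have hEnull : ∀ x : UnitAddCircle, μ (Xᶜ ∪ (T ⁻¹' {a} ∪ T ⁻¹' {T x})) = 0 := by
    intro x
    refine le_antisymm (le_trans (measure_union_le _ _) ?_) (zero_le)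
    rw [hsupp]
    have h1 : μ (T ⁻¹' {a} ∪ T ⁻¹' {T x}) = 0 :=
      ((hfib a).union (hfib (T x))).countable.measure_zero μ
    rw [h1, add_zero]
  have hμeq_of : ∀ S V G : Set UnitAddCircle, μ G = 0 → S \ G ⊆ V → V \ G ⊆ S →
      μ S = μ V := by
    intro S V G hG h1 h2
    have key : ∀ A B : Set UnitAddCircle, A \ G ⊆ B → μ A ≤ μ B := by
      intro A B hAB
      calc μ A ≤ μ (B ∪ G) := measure_mono (fun z hz => by
            by_cases h : z ∈ G
            · exact Or.inr h
            · exact Or.inl (hAB ⟨hz, h⟩))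
        _ ≤ μ B + μ G := measure_union_le _ _
        _ = μ B := by rw [hG, add_zero]
    exact le_antisymm (key S V h1) (key V S h2)
  -- the two cases of the fundamental identity
  have hcase2 : ∀ x ∈ X, T x ≠ a → b' ≤ rep x →
      m (rep (T x)) + m b' = m (rep x) := by
    intro x hx hxa hbr
    have hrXr : rep x ∈ Xr := hrepX x hx
    have htXr : rep (T x) ∈ Xr := hrepX _ (hmaps hx)
    have hxcoe : (((rep x):ℝ):UnitAddCircle) = x := rep_coe x
    have ht1 : rep (T x) < 1 := (hXrIco _ htXr).2
    have hr1 : rep x < 1 := (hXrIco _ hrXr).2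
    have hbr' : b' < rep x := by
      rcases lt_or_eq_of_le hbr with h | h
      · exact h
      · exfalso; apply hxa; rw [← hxcoe, ← h]; exact hTb'
    have hμW : μ (T ⁻¹' {z : UnitAddCircle | α ≤ rep z ∧ rep z ≤ rep (T x)})
        = m (rep (T x)) := hμinv _ (measurable_arc hα0.le ht1)
    have hVeq : μ (T ⁻¹' {z : UnitAddCircle | α ≤ rep z ∧ rep z ≤ rep (T x)})
        = μ {w : UnitAddCircle | b' ≤ rep w ∧ rep w ≤ rep x} := by
      apply hμeq_of _ _ _ (hEnull x)
      · rintro w ⟨hwW, hwG⟩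
        simp only [Set.mem_union, Set.mem_compl_iff, Set.mem_preimage,
          Set.mem_singleton_iff, not_or, not_not] at hwG
        obtain ⟨hwX, hwa, hwx⟩ := hwG
        simp only [Set.mem_preimage, Set.mem_setOf_eq] at hwW
        have hsXr : rep w ∈ Xr := hrepX w hwX
        have hwcoe : (((rep w):ℝ):UnitAddCircle) = w := rep_coe w
        simp only [Set.mem_setOf_eq]
        constructor
        · by_contra hcon
          push_neg at hcon
          have := hD (rep w) (rep x) hsXr hrXr hcon hbr'
            (by rw [hwcoe]; exact hwa) (by rw [hxcoe]; exact hxa)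
            (by rw [hwcoe, hxcoe]; exact hwx)
          rw [hwcoe, hxcoe] at this
          exact absurd hwW.2 (not_le.mpr this)
        · by_contra hcon
          push_neg at hcon
          have := hM2 (rep x) (rep w) hrXr hsXr hbr' hcon
            (by rw [hxcoe]; exact hxa) (by rw [hwcoe]; exact hwa)
            (by rw [hwcoe, hxcoe]; exact fun h => hwx h.symm)
          rw [hwcoe, hxcoe] at this
          exact absurd hwW.2 (not_le.mpr this)
      · rintro w ⟨⟨h1, h2⟩, hwG⟩
        simp only [Set.mem_union, Set.mem_compl_iff, Set.mem_preimage,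
          Set.mem_singleton_iff, not_or, not_not] at hwG
        obtain ⟨hwX, hwa, hwx⟩ := hwG
        have hsXr : rep w ∈ Xr := hrepX w hwX
        have hwcoe : (((rep w):ℝ):UnitAddCircle) = w := rep_coe w
        have hb's : b' < rep w := by
          rcases lt_or_eq_of_le h1 with h | h
          · exact h
          · exfalso; apply hwa; rw [← hwcoe, ← h]; exact hTb'
        have hsr : rep w < rep x := by
          rcases lt_or_eq_of_le h2 with h | h
          · exact h
          · exfalso; apply hwx
            rw [← hwcoe, ← hxcoe, h]
        have := hM2 (rep w) (rep x) hsXr hrXr hb's hsr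
          (by rw [hwcoe]; exact hwa) (by rw [hxcoe]; exact hxa)
          (by rw [hwcoe, hxcoe]; exact hwx)
        rw [hwcoe, hxcoe] at this
        simp only [Set.mem_preimage, Set.mem_setOf_eq]
        exact ⟨hαle _ (hrepX _ (hmaps hwX)), this.le⟩
    have hμV : μ {w : UnitAddCircle | b' ≤ rep w ∧ rep w ≤ rep x}
        = μ {w : UnitAddCircle | b' < rep w ∧ rep w ≤ rep x} :=
      hseg_union b' (rep x) hb'0 hb'1 hbr'.le
    have hsp := hsplit b' (rep x) hαb'.le hbr'.le hr1
    rw [← hsp, ← hμW, hVeq, hμV, add_comm]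
  have hcase1 : ∀ x ∈ X, T x ≠ a → rep x < b' →
      m (rep (T x)) + m b' = m (rep x) + 1 := by
    intro x hx hxa hrb
    have hrXr : rep x ∈ Xr := hrepX x hx
    have htXr : rep (T x) ∈ Xr := hrepX _ (hmaps hx)
    have hxcoe : (((rep x):ℝ):UnitAddCircle) = x := rep_coe x
    have ht1 : rep (T x) < 1 := (hXrIco _ htXr).2
    have hμW : μ (T ⁻¹' {z : UnitAddCircle | α ≤ rep z ∧ rep z ≤ rep (T x)})
        = m (rep (T x)) := hμinv _ (measurable_arc hα0.le ht1)
    have hVeq : μ (T ⁻¹' {z : UnitAddCircle | α ≤ rep z ∧ rep z ≤ rep (T x)})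
        = μ ({w : UnitAddCircle | α ≤ rep w ∧ rep w ≤ rep x}
            ∪ {w : UnitAddCircle | b' ≤ rep w ∧ rep w ≤ β}) := by
      apply hμeq_of _ _ _ (hEnull x)
      · rintro w ⟨hwW, hwG⟩
        simp only [Set.mem_union, Set.mem_compl_iff, Set.mem_preimage,
          Set.mem_singleton_iff, not_or, not_not] at hwG
        obtain ⟨hwX, hwa, hwx⟩ := hwG
        simp only [Set.mem_preimage, Set.mem_setOf_eq] at hwW
        have hsXr : rep w ∈ Xr := hrepX w hwX
        have hwcoe : (((rep w):ℝ):UnitAddCircle) = w := rep_coe w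
        simp only [Set.mem_union, Set.mem_setOf_eq]
        rcases le_or_gt (rep w) (rep x) with h | h
        · exact Or.inl ⟨hαle _ hsXr, h⟩
        rcases le_or_gt b' (rep w) with h' | h'
        · exact Or.inr ⟨h', hβge _ hsXr⟩
        exfalso
        have := hM1 (rep x) (rep w) hrXr hsXr h h'
          (by rw [hxcoe]; exact hxa) (by rw [hwcoe]; exact hwa)
          (by rw [hwcoe, hxcoe]; exact fun hh => hwx hh.symm)
        rw [hwcoe, hxcoe] at this
        exact absurd hwW.2 (not_le.mpr this)
      · rintro w ⟨hwV, hwG⟩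
        simp only [Set.mem_union, Set.mem_compl_iff, Set.mem_preimage,
          Set.mem_singleton_iff, not_or, not_not] at hwG
        obtain ⟨hwX, hwa, hwx⟩ := hwG
        have hsXr : rep w ∈ Xr := hrepX w hwX
        have hwcoe : (((rep w):ℝ):UnitAddCircle) = w := rep_coe w
        have hTwX : α ≤ rep (T w) := hαle _ (hrepX _ (hmaps hwX))
        simp only [Set.mem_union, Set.mem_setOf_eq] at hwV
        simp only [Set.mem_preimage, Set.mem_setOf_eq]
        rcases hwV with ⟨h1, h2⟩ | ⟨h1, h2⟩
        · have hsr : rep w < rep x := by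
            rcases lt_or_eq_of_le h2 with h | h
            · exact h
            · exfalso; apply hwx; rw [← hwcoe, ← hxcoe, h]
          have := hM1 (rep w) (rep x) hsXr hrXr hsr hrb
            (by rw [hwcoe]; exact hwa) (by rw [hxcoe]; exact hxa)
            (by rw [hwcoe, hxcoe]; exact hwx)
          rw [hwcoe, hxcoe] at this
          exact ⟨hTwX, this.le⟩
        · have hb's : b' < rep w := by
            rcases lt_or_eq_of_le h1 with h | h
            · exact h
            · exfalso; apply hwa; rw [← hwcoe, ← h]; exact hTb'
          have := hD (rep x) (rep w) hrXr hsXr hrb hb's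
            (by rw [hxcoe]; exact hxa) (by rw [hwcoe]; exact hwa)
            (by rw [hwcoe, hxcoe]; exact fun hh => hwx hh.symm)
          rw [hwcoe, hxcoe] at this
          exact ⟨hTwX, this.le⟩
    have hdisj2 : Disjoint {w : UnitAddCircle | α ≤ rep w ∧ rep w ≤ rep x}
        {w : UnitAddCircle | b' ≤ rep w ∧ rep w ≤ β} := by
      rw [Set.disjoint_left]
      rintro w ⟨_, h2⟩ ⟨h3, _⟩
      linarith
    have hμunion : μ ({w : UnitAddCircle | α ≤ rep w ∧ rep w ≤ rep x}
        ∪ {w : UnitAddCircle | b' ≤ rep w ∧ rep w ≤ β})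
        = m (rep x) + μ {w : UnitAddCircle | b' ≤ rep w ∧ rep w ≤ β} :=
      measure_union hdisj2 (measurable_arc hb'0 hβ1)
    have hμV2 : μ {w : UnitAddCircle | b' ≤ rep w ∧ rep w ≤ β}
        = μ {w : UnitAddCircle | b' < rep w ∧ rep w ≤ β} :=
      hseg_union b' β hb'0 hb'1 hb'β
    have hsp := hsplit b' β hαb'.le hb'β hβ1
    rw [hmβ] at hsp
    rw [hμW] at hVeq
    have e1 : m (rep (T x)) = m (rep x) + μ {w : UnitAddCircle | b' < rep w ∧ rep w ≤ β} := by
      rw [hVeq, hμunion, hμV2]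
    rw [e1, add_assoc, add_comm (μ {w : UnitAddCircle | b' < rep w ∧ rep w ≤ β}) (m b'), hsp]
  -- main identity away from the preimage of a
  have hmain0 : ∀ x ∈ X, T x ≠ a →
      ((Φ (T x) : ℝ) : UnitAddCircle) = ((Φ x + θ₀ : ℝ) : UnitAddCircle) := by
    intro x hx hxa
    rcases lt_or_ge (rep x) b' with hc | hc
    · have h := hcase1 x hx hxa hc
      have hre : (m (rep (T x))).toReal + (m b').toReal = (m (rep x)).toReal + 1 := by
        have h2 := congrArg ENNReal.toReal h
        rwa [ENNReal.toReal_add (hmfin _) (hmfin _),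
          ENNReal.toReal_add (hmfin _) ENNReal.one_ne_top, ENNReal.toReal_one] at h2
      rw [hΦeq (T x), hΦeq x]
      congr 1
      rw [hθ_def]; linarith
    · have h := hcase2 x hx hxa hc
      have hre : (m (rep (T x))).toReal + (m b').toReal = (m (rep x)).toReal := by
        have h2 := congrArg ENNReal.toReal h
        rwa [ENNReal.toReal_add (hmfin _) (hmfin _)] at h2
      rw [hΦeq (T x), hΦeq x]
      rw [show ((m (rep x)).toReal + θ₀ : ℝ) = (m (rep (T x))).toReal + 1 by
        rw [hθ_def]; linarith]
      exact (AddCircle.coe_add_period 1 _).symm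
  -- continuity of Φ away from 0
  have hΦcont : ∀ z : UnitAddCircle, z ≠ 0 → ContinuousAt Φ z := by
    intro z hz
    have hΦfun : Φ = (fun t : ℝ =>
        (μ {w : UnitAddCircle | α ≤ rep w ∧ rep w ≤ t}).toReal) ∘ rep := by
      funext y; exact hΦ y
    rw [hΦfun]
    apply ContinuousAt.comp
    · exact F_cont μ hatom α hα0.le (rep_mem z).1 (rep_mem z).2
    · have h1 : ContinuousAt (AddCircle.equivIco 1 0) z :=
        AddCircle.continuousAt_equivIco 1 0 (by
          intro h
          apply hz
          rw [h]
          norm_num)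
      exact (continuous_subtype_val.continuousAt).comp h1
  have hx0 : ∀ x ∈ X, x ≠ 0 := fun x hx h => h0 (h ▸ hx)
  have hmainall : ∀ x ∈ X,
      ((Φ (T x) : ℝ) : UnitAddCircle) = ((Φ x + θ₀ : ℝ) : UnitAddCircle) := by
    intro x hx
    by_cases hxa : T x = a
    case neg => exact hmain0 x hx hxa
    have hxper : x ∉ {z : UnitAddCircle | ∃ n : ℕ, T^[n] (T x) = z} := by
      rintro ⟨n, hn⟩
      exact hnoper x hx (n+1) (by omega) (by rwa [Function.iterate_succ_apply])
    have hxcl : x ∈ closure {z : UnitAddCircle | ∃ n : ℕ, T^[n] (T x) = z} :=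
      hmin (T x) (hmaps hx) x hx
    have hxcl' : x ∈ closure ({z : UnitAddCircle | ∃ n : ℕ, T^[n] (T x) = z} \ (T ⁻¹' {a})) := by
      have hsplitS : {z : UnitAddCircle | ∃ n : ℕ, T^[n] (T x) = z}
          ⊆ ({z : UnitAddCircle | ∃ n : ℕ, T^[n] (T x) = z} \ (T ⁻¹' {a}))
            ∪ ({z : UnitAddCircle | ∃ n : ℕ, T^[n] (T x) = z} ∩ T ⁻¹' {a}) := by
        intro z hz
        by_cases h : z ∈ T ⁻¹' {a}
        · exact Or.inr ⟨hz, h⟩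
        · exact Or.inl ⟨hz, h⟩
      have h2 := closure_mono hsplitS hxcl
      rw [closure_union] at h2
      rcases h2 with h2 | h2
      · exact h2
      · exfalso
        have hfin : ({z : UnitAddCircle | ∃ n : ℕ, T^[n] (T x) = z} ∩ T ⁻¹' {a}).Finite :=
          (hfib a).subset Set.inter_subset_right
        rw [hfin.isClosed.closure_eq] at h2
        exact hxper h2.1
    haveI hne : (nhdsWithin x ({z : UnitAddCircle | ∃ n : ℕ, T^[n] (T x) = z} \ (T ⁻¹' {a}))).NeBot :=
      mem_closure_iff_nhdsWithin_neBot.mp hxcl'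
    have hSX : ({z : UnitAddCircle | ∃ n : ℕ, T^[n] (T x) = z} \ (T ⁻¹' {a})) ⊆ X := by
      rintro z ⟨⟨n, hn⟩, _⟩
      rw [← hn]; exact (hmaps.iterate n) (hmaps hx)
    have hf : Filter.Tendsto (fun y => ((Φ (T y) : ℝ) : UnitAddCircle))
        (nhdsWithin x ({z : UnitAddCircle | ∃ n : ℕ, T^[n] (T x) = z} \ (T ⁻¹' {a})))
        (nhds ((Φ (T x) : ℝ) : UnitAddCircle)) := by
      have hTx0 : T x ≠ 0 := by rw [hxa]; exact hx0 a haX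
      have hc : ContinuousAt (fun y => ((Φ (T y) : ℝ) : UnitAddCircle)) x :=
        (hco.continuousAt).comp ((hΦcont (T x) hTx0).comp (hT.continuousAt))
      exact hc.continuousWithinAt
    have hg : Filter.Tendsto (fun y => ((Φ y + θ₀ : ℝ) : UnitAddCircle))
        (nhdsWithin x ({z : UnitAddCircle | ∃ n : ℕ, T^[n] (T x) = z} \ (T ⁻¹' {a})))
        (nhds ((Φ x + θ₀ : ℝ) : UnitAddCircle)) := by
      have hc : ContinuousAt (fun y => ((Φ y + θ₀ : ℝ) : UnitAddCircle)) x :=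
        (hco.continuousAt).comp ((hΦcont x (hx0 x hx)).add continuousAt_const)
      exact hc.continuousWithinAt
    have hfg : (fun y => ((Φ (T y) : ℝ) : UnitAddCircle)) =ᶠ[nhdsWithin x
        ({z : UnitAddCircle | ∃ n : ℕ, T^[n] (T x) = z} \ (T ⁻¹' {a}))]
        (fun y => ((Φ y + θ₀ : ℝ) : UnitAddCircle)) := by
      filter_upwards [self_mem_nhdsWithin] with y hy
      exact hmain0 y (hSX hy) (fun h => hy.2 (by simpa using h))
    exact tendsto_nhds_unique (hf.congr' hfg) hg
  -- coercion helpers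
  have hcoe_add : ∀ u v : ℝ, ((u + v : ℝ) : UnitAddCircle)
      = ((u:ℝ) : UnitAddCircle) + ((v:ℝ) : UnitAddCircle) := fun u v => rfl
  have hcoe_int : ∀ k : ℤ, (((k:ℝ)) : UnitAddCircle) = 0 := by
    intro k
    rw [QuotientAddGroup.eq_zero_iff]
    exact ⟨k, by simp⟩
  have hΦ01 : ∀ y : UnitAddCircle, Φ y ∈ Set.Icc (0:ℝ) 1 := by
    intro y
    rw [hΦeq]
    refine ⟨ENNReal.toReal_nonneg, ?_⟩
    have h := ENNReal.toReal_mono ENNReal.one_ne_top (hmle1 (rep y))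
    simpa using h
  -- irrationality of θ₀
  have hirr : Irrational θ₀ := by
    by_contra hrat
    obtain ⟨ρ, hρ⟩ := not_not.mp hrat
    have hNθ : ((ρ.den : ℕ) : ℝ) * θ₀ = (ρ.num : ℝ) := by
      rw [← hρ, Rat.cast_def]
      field_simp
    have hiter : ∀ n : ℕ, ∀ x ∈ X, ((Φ (T^[n] x) : ℝ) : UnitAddCircle)
        = ((Φ x + n * θ₀ : ℝ) : UnitAddCircle) := by
      intro n
      induction n with
      | zero => intro x hx; simp
      | succ n ih =>
        intro x hx
        rw [Function.iterate_succ_apply']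
        rw [hmainall (T^[n] x) ((hmaps.iterate n) hx)]
        rw [hcoe_add (Φ (T^[n] x)) θ₀, ih x hx, ← hcoe_add]
        congr 1
        push_cast
        ring
    have hNkey : ∀ x ∈ X, ((Φ (T^[ρ.den] x) : ℝ) : UnitAddCircle)
        = ((Φ x : ℝ) : UnitAddCircle) := by
      intro x hx
      rw [hiter ρ.den x hx, hcoe_add, hNθ, hcoe_int ρ.num, add_zero]
    have hint : ∀ x ∈ X, ∃ k : ℤ, Φ (T^[ρ.den] x) - Φ x = (k : ℝ) := by
      intro x hx
      have h := hNkey x hx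
      have h2 : Φ (T^[ρ.den] x) - Φ x ∈ AddSubgroup.zmultiples (1:ℝ) :=
        (QuotientAddGroup.eq_iff_sub_mem).mp h
      obtain ⟨k, hk⟩ := AddSubgroup.mem_zmultiples_iff.mp h2
      exact ⟨k, by simpa using hk.symm⟩
    have hN1 : 1 ≤ ρ.den := ρ.pos
    -- extreme points
    have hbpX : (((β:ℝ):UnitAddCircle)) ∈ X := hXrmem β hβXr
    have hrepbp : rep (((β:ℝ):UnitAddCircle)) = β :=
      rep_coe' ⟨le_trans hα0.le (hαle β hβXr), hβ1⟩
    have hm0 : ∀ x ∈ X, Φ x = 0 → x = a := by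
      intro x hx hΦx
      have hmx : m (rep x) = 0 := by
        rw [hΦeq] at hΦx
        rcases (ENNReal.toReal_eq_zero_iff _).mp hΦx with h | h
        · exact h
        · exact absurd h (hmfin _)
      have hrx : rep x = α := by
        by_contra hne
        have hlt : α < rep x := lt_of_le_of_ne (hαle _ (hrepX x hx)) (Ne.symm hne)
        have hU := hopenpos {z : UnitAddCircle | α/2 < rep z ∧ rep z < rep x}
          (open_arc (by positivity) (rep_mem x).2.le)
          ⟨a, ⟨by rw [hrepa]; linarith, by rw [hrepa]; exact hlt⟩, haX⟩
        apply hU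
        have hsub : {z : UnitAddCircle | α/2 < rep z ∧ rep z < rep x}
            ⊆ {z : UnitAddCircle | α ≤ rep z ∧ rep z ≤ rep x} ∪ Xᶜ := by
          intro z hz
          by_cases h : z ∈ X
          · exact Or.inl ⟨hαle _ (hrepX z h), hz.2.le⟩
          · exact Or.inr h
        refine le_antisymm (le_trans (measure_mono hsub) ?_) (zero_le)
        refine le_trans (measure_union_le _ _) ?_
        rw [hsupp, add_zero]
        exact le_of_eq hmx
      rw [← rep_coe x, hrx, ha_def]
    have hm1 : ∀ x ∈ X, Φ x = 1 → x = (((β:ℝ):UnitAddCircle)) := by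
      intro x hx hΦx
      have hmx : m (rep x) = 1 := by
        rw [hΦeq] at hΦx
        have h2 : (m (rep x)).toReal = (m β).toReal := by
          rw [hΦx, hmβ, ENNReal.toReal_one]
        rw [(ENNReal.toReal_eq_toReal_iff' (hmfin _) (hmfin _)).mp h2, hmβ]
      have hrx : rep x = β := by
        by_contra hne
        have hlt : rep x < β := lt_of_le_of_ne (hβge _ (hrepX x hx)) hne
        have hseg : μ {z : UnitAddCircle | rep x < rep z ∧ rep z ≤ β} = 0 := by
          have hsp := hsplit (rep x) β (hαle _ (hrepX x hx)) hlt.le hβ1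
          rw [hmβ, ← hmx] at hsp
          nth_rewrite 2 [← add_zero (m (rep x))] at hsp
          exact (ENNReal.add_right_inj (hmfin _)).mp hsp
        have hU := hopenpos {z : UnitAddCircle | rep x < rep z ∧ rep z < β + (1-β)/2}
          (open_arc (rep_mem x).1 (by linarith))
          ⟨(((β:ℝ):UnitAddCircle)), ⟨by rw [hrepbp]; linarith, by rw [hrepbp]; linarith⟩, hbpX⟩
        apply hU
        have hsub : {z : UnitAddCircle | rep x < rep z ∧ rep z < β + (1-β)/2}
            ⊆ {z : UnitAddCircle | rep x < rep z ∧ rep z ≤ β} ∪ Xᶜ := by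
          intro z hz
          by_cases h : z ∈ X
          · exact Or.inl ⟨hz.1, hβge _ (hrepX z h)⟩
          · exact Or.inr h
        refine le_antisymm (le_trans (measure_mono hsub) ?_) (zero_le)
        refine le_trans (measure_union_le _ _) ?_
        rw [hsupp, hseg, add_zero]
      rw [← rep_coe x, hrx]
    -- the no-gap-point argument
    have hcover : ∀ x ∈ X, x ≠ a → x ≠ (((β:ℝ):UnitAddCircle)) →
        (∃ q : ℚ, x ∈ X ∧ rep x < (q:ℝ) ∧ ∀ w ∈ X, rep w ≤ rep x ∨ (q:ℝ) < rep w) ∨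
        (∃ q : ℚ, x ∈ X ∧ (q:ℝ) < rep x ∧ ∀ w ∈ X, rep x ≤ rep w ∨ rep w < (q:ℝ)) := by
      intro x hx hxa hxb
      have hgX : T^[ρ.den] x ∈ X := (hmaps.iterate ρ.den) hx
      have hgne : T^[ρ.den] x ≠ x := hnoper x hx ρ.den hN1
      have hrne : rep (T^[ρ.den] x) ≠ rep x := by
        intro h
        apply hgne
        have h2 := congrArg (fun r : ℝ => ((r:ℝ) : UnitAddCircle)) h
        simp only [rep_coe] at h2
        exact h2
      obtain ⟨k, hk⟩ := hint x hx
      have hb1 := hΦ01 x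
      have hb2 := hΦ01 (T^[ρ.den] x)
      have hk1 : (k:ℝ) ≤ 1 := by rw [← hk]; linarith [hb1.1, hb2.2]
      have hk2 : (-1:ℝ) ≤ (k:ℝ) := by rw [← hk]; linarith [hb1.2, hb2.1]
      have hkle : k ≤ 1 := by exact_mod_cast hk1
      have hkge : -1 ≤ k := by exact_mod_cast hk2
      interval_cases k
      · -- k = -1 : Φ x = 1, x = bp, contradiction
        exfalso
        apply hxb
        apply hm1 x hx
        have : Φ (T^[ρ.den] x) - Φ x = -1 := by rw [hk]; norm_num
        linarith [hb2.1, hb1.2]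
      · -- k = 0 : equal measures, gap
        have hΦeq2 : m (rep (T^[ρ.den] x)) = m (rep x) := by
          have : Φ (T^[ρ.den] x) = Φ x := by rw [← sub_eq_zero]; rw [hk]; norm_num
          rw [hΦeq, hΦeq] at this
          exact (ENNReal.toReal_eq_toReal_iff' (hmfin _) (hmfin _)).mp this
        rcases hrne.lt_or_gt with hlt | hlt
        · -- rep gx < rep x : x ∈ Gm
          right
          have hseg : μ {z : UnitAddCircle | rep (T^[ρ.den] x) < rep z ∧ rep z ≤ rep x} = 0 := by
            have hsp := hsplit (rep (T^[ρ.den] x)) (rep x) (hαle _ (hrepX _ hgX)) hlt.le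
              (rep_mem x).2
            rw [← hΦeq2] at hsp
            nth_rewrite 2 [← add_zero (m (rep (T^[ρ.den] x)))] at hsp
            exact (ENNReal.add_right_inj (hmfin _)).mp hsp
          have hfree : ∀ w ∈ X, ¬(rep (T^[ρ.den] x) < rep w ∧ rep w < rep x) := by
            intro w hw hcon
            have hnemp : ({z : UnitAddCircle | rep (T^[ρ.den] x) < rep z ∧ rep z < rep x}
                ∩ X).Nonempty := ⟨w, hcon, hw⟩
            apply hopenpos _ (open_arc (rep_mem _).1 (rep_mem x).2.le) hnemp
            have hsub2 : {z : UnitAddCircle | rep (T^[ρ.den] x) < rep z ∧ rep z < rep x}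
                ⊆ {z : UnitAddCircle | rep (T^[ρ.den] x) < rep z ∧ rep z ≤ rep x} :=
              fun z hz => ⟨hz.1, hz.2.le⟩
            exact le_antisymm (le_trans (measure_mono hsub2) (le_of_eq hseg)) (zero_le)
          obtain ⟨q, hq1, hq2⟩ := exists_rat_btwn hlt
          refine ⟨q, hx, hq2, ?_⟩
          intro w hw
          by_cases h : rep x ≤ rep w
          · exact Or.inl h
          · right
            by_contra hcon
            push_neg at hcon
            exact hfree w hw ⟨lt_of_lt_of_le hq1 hcon, not_le.mp h⟩
        · -- rep x < rep gx : x ∈ Gp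
          left
          have hseg : μ {z : UnitAddCircle | rep x < rep z ∧ rep z ≤ rep (T^[ρ.den] x)} = 0 := by
            have hsp := hsplit (rep x) (rep (T^[ρ.den] x)) (hαle _ (hrepX _ hx)) hlt.le
              (rep_mem _).2
            rw [hΦeq2] at hsp
            nth_rewrite 2 [← add_zero (m (rep x))] at hsp
            exact (ENNReal.add_right_inj (hmfin _)).mp hsp
          have hfree : ∀ w ∈ X, ¬(rep x < rep w ∧ rep w < rep (T^[ρ.den] x)) := by
            intro w hw hcon
            have hnemp : ({z : UnitAddCircle | rep x < rep z ∧ rep z < rep (T^[ρ.den] x)}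
                ∩ X).Nonempty := ⟨w, hcon, hw⟩
            apply hopenpos _ (open_arc (rep_mem x).1 (rep_mem _).2.le) hnemp
            have hsub2 : {z : UnitAddCircle | rep x < rep z ∧ rep z < rep (T^[ρ.den] x)}
                ⊆ {z : UnitAddCircle | rep x < rep z ∧ rep z ≤ rep (T^[ρ.den] x)} :=
              fun z hz => ⟨hz.1, hz.2.le⟩
            exact le_antisymm (le_trans (measure_mono hsub2) (le_of_eq hseg)) (zero_le)
          obtain ⟨q, hq1, hq2⟩ := exists_rat_btwn hlt
          refine ⟨q, hx, hq1, ?_⟩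
          intro w hw
          by_cases h : rep w ≤ rep x
          · exact Or.inl h
          · right
            by_contra hcon
            push_neg at hcon
            exact hfree w hw ⟨not_le.mp h, lt_of_le_of_lt hcon hq2⟩
      · -- k = 1 : Φ x = 0, x = a, contradiction
        exfalso
        apply hxa
        apply hm0 x hx
        have : Φ (T^[ρ.den] x) - Φ x = 1 := by rw [hk]; norm_num
        linarith [hb2.2, hb1.1]
    -- countability of X, contradiction
    have hXcount : X.Countable := by
      have hsub : X ⊆ ({a, (((β:ℝ):UnitAddCircle))} : Set UnitAddCircle)
          ∪ ((⋃ q : ℚ, {x | x ∈ X ∧ rep x < (q:ℝ) ∧ ∀ w ∈ X, rep w ≤ rep x ∨ (q:ℝ) < rep w})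
            ∪ (⋃ q : ℚ, {x | x ∈ X ∧ (q:ℝ) < rep x ∧ ∀ w ∈ X, rep x ≤ rep w ∨ rep w < (q:ℝ)})) := by
        intro x hx
        by_cases hxa : x = a
        · exact Or.inl (Or.inl hxa)
        by_cases hxb : x = (((β:ℝ):UnitAddCircle))
        · exact Or.inl (Or.inr hxb)
        rcases hcover x hx hxa hxb with ⟨q, hq⟩ | ⟨q, hq⟩
        · exact Or.inr (Or.inl (Set.mem_iUnion.mpr ⟨q, hq⟩))
        · exact Or.inr (Or.inr (Set.mem_iUnion.mpr ⟨q, hq⟩))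
      refine Set.Countable.mono hsub ?_
      refine Set.Countable.union (Set.Finite.countable (Set.Finite.insert _ (Set.finite_singleton _))) (Set.Countable.union ?_ ?_)
      · refine Set.countable_iUnion (fun q => Set.Subsingleton.countable ?_)
        intro x hx y hy
        rcases hx.2.2 y hy.1 with h | h
        · rcases hy.2.2 x hx.1 with h' | h'
          · have hxy : rep x = rep y := le_antisymm h' h
            have h2 := congrArg (fun r : ℝ => ((r:ℝ) : UnitAddCircle)) hxy
            simp only [rep_coe] at h2
            exact h2
          · exact absurd hx.2.1 (not_lt.mpr h'.le)
        · exact absurd hy.2.1 (not_lt.mpr h.le)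
      · refine Set.countable_iUnion (fun q => Set.Subsingleton.countable ?_)
        intro x hx y hy
        rcases hx.2.2 y hy.1 with h | h
        · rcases hy.2.2 x hx.1 with h' | h'
          · have hxy : rep x = rep y := le_antisymm h h'
            have h2 := congrArg (fun r : ℝ => ((r:ℝ) : UnitAddCircle)) hxy
            simp only [rep_coe] at h2
            exact h2
          · exact absurd hx.2.1 (not_lt.mpr h'.le)
        · exact absurd hy.2.1 (not_lt.mpr h.le)
    have hzero : μ X = 0 := hXcount.measure_zero μ
    rw [hmuX] at hzero
    exact one_ne_zero hzero
  -- conclusion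
  have hθ1 : θ₀ ≤ 1 := by
    rw [hθ_def]
    have := ENNReal.toReal_nonneg (a := m b')
    linarith
  have hθ0 : 0 ≤ θ₀ := by
    rw [hθ_def]
    have h := ENNReal.toReal_mono ENNReal.one_ne_top (hmle1 b')
    simp only [ENNReal.toReal_one] at h
    linarith
  refine ⟨θ₀, hirr, ⟨?_, ?_⟩, hmainall⟩
  · rcases lt_or_eq_of_le hθ0 with h | h
    · exact h
    · exfalso
      apply hirr.ne_int 0
      rw [← h]; norm_num
  · rcases lt_or_eq_of_le hθ1 with h | h
    · exact h
    · exfalso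
      apply hirr.ne_int 1
      rw [h]; norm_num
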